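/- arXiv:2107.01661 — 2 statements merged into one kernel-verified Lean document; each statement's English description precedes it below -/
import Mathlib

section
/- Fix 0 ≤ t < T₀ ≤ T and μ ∈ 𝒫₀(𝕊). For any α*, α̃* ∈ 𝒜_state, set α̂* := α* ⊕_{T₀} α̃* and ψ(y,ν) := J(T₀,ν,α̃*;y,α̃*). Then α̂* ∈ ℳ_state(t,μ) if and only if α* ∈ ℳ_state(T₀,ψ;t,μ) and α̃* ∈ ℳ_state(T₀, μ^{α*}_{T₀}). -/
/-!
Statement 0 (Proposition 2.3, time consistency of state-dependent MFE).

Discrete-time finite-state mean field game.  Time set `𝕋 = {0,…,T}` (we use `ℕ` and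
restrict attention to times `≤ T`), finite state space `S`, control set `A`.
Probability measures on `S` are encoded as functions `S → ℝ` satisfying `IsProb`.
-/

open Finset

namespace MFGSetValue

variable {S A : Type*} [Fintype S] [DecidableEq S]

/-- A probability vector on the finite state space `S`. -/
def IsProb (μ : S → ℝ) : Prop := (∀ x, 0 ≤ μ x) ∧ ∑ x, μ x = 1

/-- The measure flow `μ^α` determined by `ℙ^{t,μ,α}`:
`μ^α_t = μ` and `μ^α_{s+1}(y) = ∑_x μ^α_s(x) q(s,x,μ^α_s,α(s,x);y)`.
(For `s < t` the value is irrelevant; we set it to `μ`.) -/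
noncomputable def flow (q : ℕ → S → (S → ℝ) → A → S → ℝ) (α : ℕ → S → A)
    (t : ℕ) (μ : S → ℝ) : ℕ → S → ℝ
  | 0 => μ
  | s + 1 =>
    if s + 1 ≤ t then μ
    else fun y => ∑ x, flow q α t μ s x * q s x (flow q α t μ s) (α s x) y

/-- The law at each time of the Markov chain `ℙ^{{ν_·}; t, x₀, α̃}` started from `x₀`
at time `t`, moving with transitions `q(s, ·, ν_s, α̃(s,·); ·)`. -/
noncomputable def chain (q : ℕ → S → (S → ℝ) → A → S → ℝ) (ν : ℕ → S → ℝ)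
    (αt : ℕ → S → A) (t : ℕ) (x₀ : S) : ℕ → S → ℝ
  | 0 => fun x => if x = x₀ then 1 else 0
  | s + 1 =>
    if s + 1 ≤ t then fun x => if x = x₀ then 1 else 0
    else fun y => ∑ x, chain q ν αt t x₀ s x * q s x (ν s) (αt s x) y

/-- The cost `J(T₀, ψ; {ν_·}; t, x₀, α̃)` with horizon `T₀`, terminal reward `ψ(X_{T₀}, ν_{T₀})`,
running cost `F`, against the measure flow `ν`:
`E[ψ(X_{T₀}, ν_{T₀}) + ∑_{s=t}^{T₀-1} F(s, X_s, ν_s, α̃(s,X_s))]`. -/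
noncomputable def cost (q : ℕ → S → (S → ℝ) → A → S → ℝ)
    (F : ℕ → S → (S → ℝ) → A → ℝ) (T₀ : ℕ) (ψ : S → (S → ℝ) → ℝ)
    (ν : ℕ → S → ℝ) (t : ℕ) (x₀ : S) (αt : ℕ → S → A) : ℝ :=
  (∑ x, chain q ν αt t x₀ T₀ x * ψ x (ν T₀)) +
    ∑ s ∈ Finset.Ico t T₀, ∑ x, chain q ν αt t x₀ s x * F s x (ν s) (αt s x)

/-- The value `v(T₀,ψ; {ν_·}; t, x₀) = inf_{α̃ ∈ 𝒜_state} J(T₀,ψ;{ν_·};t,x₀,α̃)`. -/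
noncomputable def value (q : ℕ → S → (S → ℝ) → A → S → ℝ)
    (F : ℕ → S → (S → ℝ) → A → ℝ) (T₀ : ℕ) (ψ : S → (S → ℝ) → ℝ)
    (ν : ℕ → S → ℝ) (t : ℕ) (x₀ : S) : ℝ :=
  sInf { r : ℝ | ∃ αt : ℕ → S → A, r = cost q F T₀ ψ ν t x₀ αt }

/-- `α ∈ ℳ_state(T₀, ψ; t, μ)`: a state-dependent MFE for the game on `{t,…,T₀}` with
terminal cost `ψ`.  (Taking `T₀ = T`, `ψ = G` gives `ℳ_state(t,μ)`.) -/
def isMFE (q : ℕ → S → (S → ℝ) → A → S → ℝ) (F : ℕ → S → (S → ℝ) → A → ℝ)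
    (T₀ : ℕ) (ψ : S → (S → ℝ) → ℝ) (t : ℕ) (μ : S → ℝ) (α : ℕ → S → A) : Prop :=
  ∀ x, cost q F T₀ ψ (flow q α t μ) t x α = value q F T₀ ψ (flow q α t μ) t x

/-- Concatenation `α ⊕_{T₀} α'`. -/
def concat (T₀ : ℕ) (α α' : ℕ → S → A) : ℕ → S → A :=
  fun s x => if s < T₀ then α s x else α' s x

set_option linter.unusedSectionVars false
section Aux
variable {S A : Type*} [Fintype S] [DecidableEq S]
variable {q : ℕ → S → (S → ℝ) → A → S → ℝ} {F : ℕ → S → (S → ℝ) → A → ℝ}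

lemma isProb_delta (x₀ : S) : IsProb (fun x : S => if x = x₀ then (1:ℝ) else 0) :=
  ⟨fun x => by dsimp only; split <;> norm_num, by simp⟩

lemma chain_zero (ν : ℕ → S → ℝ) (β : ℕ → S → A) (t : ℕ) (x₀ : S) :
    chain q ν β t x₀ 0 = fun x => if x = x₀ then (1:ℝ) else 0 := rfl

lemma chain_succ_le {t s : ℕ} (ν : ℕ → S → ℝ) (β : ℕ → S → A) (x₀ : S) (h : s + 1 ≤ t) :
    chain q ν β t x₀ (s+1) = fun x => if x = x₀ then (1:ℝ) else 0 := by
  rw [chain, if_pos h]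

lemma chain_succ_gt {t s : ℕ} (ν : ℕ → S → ℝ) (β : ℕ → S → A) (x₀ : S) (h : t < s + 1) :
    chain q ν β t x₀ (s+1)
      = fun y => ∑ x, chain q ν β t x₀ s x * q s x (ν s) (β s x) y := by
  rw [chain, if_neg (by omega)]

lemma chain_start (ν : ℕ → S → ℝ) (β : ℕ → S → A) (t : ℕ) (x₀ : S) :
    chain q ν β t x₀ t = fun x => if x = x₀ then (1:ℝ) else 0 := by
  cases t with
  | zero => rfl
  | succ m => exact chain_succ_le ν β x₀ le_rfl


lemma IsProb.exists_pos {p : S → ℝ} (hp : IsProb p) : ∃ x, 0 < p x := by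
  by_contra h
  push_neg at h
  have hz : ∀ x : S, p x = 0 := fun x => le_antisymm (h x) (hp.1 x)
  have := hp.2
  simp [hz] at this

lemma chain_isProb (hq0 : ∀ s x μ a y, IsProb μ → 0 < q s x μ a y)
    (hqsum : ∀ s x μ a, IsProb μ → ∑ y, q s x μ a y = 1)
    {ν : ℕ → S → ℝ} (hν : ∀ s, IsProb (ν s)) (β : ℕ → S → A) (t : ℕ) (x₀ : S) :
    ∀ r, IsProb (chain q ν β t x₀ r)
  | 0 => isProb_delta x₀
  | (r+1) => by
    by_cases h : r + 1 ≤ t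
    · rw [chain_succ_le ν β x₀ h]; exact isProb_delta x₀
    · rw [chain_succ_gt ν β x₀ (by omega)]
      have ih := chain_isProb hq0 hqsum hν β t x₀ r
      constructor
      · intro y
        exact Finset.sum_nonneg fun x _ => mul_nonneg (ih.1 x) (hq0 r x _ _ y (hν r)).le
      · have hrow : ∀ x : S, ∑ y, chain q ν β t x₀ r x * q r x (ν r) (β r x) y
            = chain q ν β t x₀ r x := by
          intro x; rw [← Finset.mul_sum, hqsum r x _ _ (hν r), mul_one]
        rw [Finset.sum_comm]
        simp_rw [hrow]
        exact ih.2

lemma chain_pos (hq0 : ∀ s x μ a y, IsProb μ → 0 < q s x μ a y)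
    (hqsum : ∀ s x μ a, IsProb μ → ∑ y, q s x μ a y = 1)
    {ν : ℕ → S → ℝ} (hν : ∀ s, IsProb (ν s)) (β : ℕ → S → A) (t : ℕ) (x₀ : S)
    (r : ℕ) (hr : t < r) (y : S) : 0 < chain q ν β t x₀ r y := by
  obtain ⟨r, rfl⟩ : ∃ m, r = m + 1 := ⟨r - 1, by omega⟩
  rw [chain_succ_gt ν β x₀ hr]
  have ih := chain_isProb hq0 hqsum hν β t x₀ r
  obtain ⟨x, hx⟩ := ih.exists_pos
  exact Finset.sum_pos'
    (fun x' _ => mul_nonneg (ih.1 x') (hq0 r x' _ _ y (hν r)).le)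
    ⟨x, Finset.mem_univ x, mul_pos hx (hq0 r x _ _ y (hν r))⟩

lemma chain_congr {ν : ℕ → S → ℝ} {β β' : ℕ → S → A} (t : ℕ) (x₀ : S) :
    ∀ r, (∀ s, t ≤ s → s < r → β s = β' s) → chain q ν β t x₀ r = chain q ν β' t x₀ r
  | 0, _ => rfl
  | (r+1), h => by
    by_cases hle : r + 1 ≤ t
    · rw [chain_succ_le ν β x₀ hle, chain_succ_le ν β' x₀ hle]
    · rw [chain_succ_gt ν β x₀ (by omega), chain_succ_gt ν β' x₀ (by omega),
        chain_congr t x₀ r (fun s hs hs' => h s hs (by omega)), h r (by omega) (by omega)]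

lemma chain_congr_nu {ν ν' : ℕ → S → ℝ} {β : ℕ → S → A} (t : ℕ) (x₀ : S) :
    ∀ r, (∀ s, t ≤ s → s < r → ν s = ν' s) → chain q ν β t x₀ r = chain q ν' β t x₀ r
  | 0, _ => rfl
  | (r+1), h => by
    by_cases hle : r + 1 ≤ t
    · rw [chain_succ_le ν β x₀ hle, chain_succ_le ν' β x₀ hle]
    · rw [chain_succ_gt ν β x₀ (by omega), chain_succ_gt ν' β x₀ (by omega),
        chain_congr_nu t x₀ r (fun s hs hs' => h s hs (by omega)), h r (by omega) (by omega)]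

lemma chain_tower {ν : ℕ → S → ℝ} {β : ℕ → S → A} (t T₀ : ℕ) (x₀ : S) (h1 : t ≤ T₀)
    (r : ℕ) (hr : T₀ ≤ r) :
    chain q ν β t x₀ r = fun y => ∑ z, chain q ν β t x₀ T₀ z * chain q ν β T₀ z r y := by
  induction r, hr using Nat.le_induction with
  | base =>
    funext y
    simp [chain_start, Finset.sum_ite_eq]
  | succ r hr ih =>
    rw [chain_succ_gt ν β x₀ (show t < r + 1 by omega), ih]
    funext y
    dsimp only
    simp_rw [chain_succ_gt ν β _ (show T₀ < r + 1 by omega)]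
    simp_rw [Finset.sum_mul, Finset.mul_sum, mul_assoc]
    rw [Finset.sum_comm]

lemma concat_lt {T₀ s : ℕ} (α α' : ℕ → S → A) (h : s < T₀) : concat T₀ α α' s = α s := by
  funext x; rw [concat, if_pos h]

lemma concat_ge {T₀ s : ℕ} (α α' : ℕ → S → A) (h : T₀ ≤ s) : concat T₀ α α' s = α' s := by
  funext x; rw [concat, if_neg (by omega)]

lemma flow_zero (α : ℕ → S → A) (t : ℕ) (μ : S → ℝ) : flow q α t μ 0 = μ := rfl

lemma flow_succ_le {t s : ℕ} (α : ℕ → S → A) (μ : S → ℝ) (h : s + 1 ≤ t) :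
    flow q α t μ (s+1) = μ := by
  rw [flow, if_pos h]

lemma flow_succ_gt {t s : ℕ} (α : ℕ → S → A) (μ : S → ℝ) (h : t < s + 1) :
    flow q α t μ (s+1)
      = fun y => ∑ x, flow q α t μ s x * q s x (flow q α t μ s) (α s x) y := by
  rw [flow, if_neg (by omega)]

lemma flow_start (α : ℕ → S → A) (t : ℕ) (μ : S → ℝ) : flow q α t μ t = μ := by
  cases t with
  | zero => rfl
  | succ m => exact flow_succ_le α μ le_rfl

lemma flow_isProb (hq0 : ∀ s x μ a y, IsProb μ → 0 < q s x μ a y)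
    (hqsum : ∀ s x μ a, IsProb μ → ∑ y, q s x μ a y = 1)
    {μ : S → ℝ} (hμ : IsProb μ) (α : ℕ → S → A) (t : ℕ) :
    ∀ r, IsProb (flow q α t μ r)
  | 0 => hμ
  | (r+1) => by
    by_cases h : r + 1 ≤ t
    · rw [flow_succ_le α μ h]; exact hμ
    · rw [flow_succ_gt α μ (by omega)]
      have ih := flow_isProb hq0 hqsum hμ α t r
      constructor
      · intro y
        exact Finset.sum_nonneg fun x _ => mul_nonneg (ih.1 x) (hq0 r x _ _ y ih).le
      · have hrow : ∀ x : S, ∑ y, flow q α t μ r x * q r x (flow q α t μ r) (α r x) y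
            = flow q α t μ r x := by
          intro x; rw [← Finset.mul_sum, hqsum r x _ _ ih, mul_one]
        rw [Finset.sum_comm]
        simp_rw [hrow]
        exact ih.2

lemma flow_congr {μ : S → ℝ} {α α' : ℕ → S → A} (t : ℕ) :
    ∀ r, (∀ s, t ≤ s → s < r → α s = α' s) → flow q α t μ r = flow q α' t μ r
  | 0, _ => rfl
  | (r+1), h => by
    by_cases hle : r + 1 ≤ t
    · rw [flow_succ_le α μ hle, flow_succ_le α' μ hle]
    · rw [flow_succ_gt α μ (by omega), flow_succ_gt α' μ (by omega),
        flow_congr t r (fun s hs hs' => h s hs (by omega)), h r (by omega) (by omega)]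

lemma flow_shift {μ : S → ℝ} (α β : ℕ → S → A) (t T₀ : ℕ) (h1 : t ≤ T₀) (r : ℕ) (hr : T₀ ≤ r) :
    flow q β T₀ (flow q α t μ T₀) r = flow q (concat T₀ α β) t μ r := by
  induction r, hr using Nat.le_induction with
  | base =>
    rw [flow_start]
    exact (flow_congr t T₀ fun s hs hs' => (concat_lt α β hs').symm)
  | succ r hr ih =>
    rw [flow_succ_gt β _ (show T₀ < r + 1 by omega),
        flow_succ_gt (concat T₀ α β) μ (show t < r + 1 by omega), ih,
        concat_ge α β hr]

lemma cost_congr {ν : ℕ → S → ℝ} {β β' : ℕ → S → A} (T₀ : ℕ) (ψ : S → (S → ℝ) → ℝ)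
    (t : ℕ) (x₀ : S) (h : ∀ s, t ≤ s → s < T₀ → β s = β' s) :
    cost q F T₀ ψ ν t x₀ β = cost q F T₀ ψ ν t x₀ β' := by
  unfold cost
  rw [chain_congr t x₀ T₀ h]
  congr 1
  refine Finset.sum_congr rfl fun s hs => ?_
  rw [Finset.mem_Ico] at hs
  rw [chain_congr t x₀ s (fun u hu hu' => h u hu (by omega)), h s hs.1 hs.2]

lemma cost_congr_nu {ν ν' : ℕ → S → ℝ} {β : ℕ → S → A} (T₀ : ℕ) (ψ : S → (S → ℝ) → ℝ)
    (t : ℕ) (x₀ : S) (hT : t ≤ T₀) (h : ∀ s, t ≤ s → s ≤ T₀ → ν s = ν' s) :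
    cost q F T₀ ψ ν t x₀ β = cost q F T₀ ψ ν' t x₀ β := by
  unfold cost
  rw [chain_congr_nu t x₀ T₀ (fun s hs hs' => h s hs (by omega)), h T₀ hT le_rfl]
  congr 1
  refine Finset.sum_congr rfl fun s hs => ?_
  rw [Finset.mem_Ico] at hs
  rw [chain_congr_nu t x₀ s (fun u hu hu' => h u hu (by omega)), h s hs.1 (by omega)]

lemma value_congr_nu {ν ν' : ℕ → S → ℝ} (T₀ : ℕ) (ψ : S → (S → ℝ) → ℝ)
    (t : ℕ) (x₀ : S) (hT : t ≤ T₀) (h : ∀ s, t ≤ s → s ≤ T₀ → ν s = ν' s) :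
    value q F T₀ ψ ν t x₀ = value q F T₀ ψ ν' t x₀ := by
  unfold value
  congr 1
  ext r
  constructor
  · rintro ⟨β, rfl⟩; exact ⟨β, cost_congr_nu T₀ ψ t x₀ hT h⟩
  · rintro ⟨β, rfl⟩; exact ⟨β, (cost_congr_nu T₀ ψ t x₀ hT h).symm⟩

lemma cost_congr_terminal {ν : ℕ → S → ℝ} {β : ℕ → S → A} (T₀ : ℕ)
    {ψ ψ' : S → (S → ℝ) → ℝ} (t : ℕ) (x₀ : S) (h : ∀ y, ψ y (ν T₀) = ψ' y (ν T₀)) :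
    cost q F T₀ ψ ν t x₀ β = cost q F T₀ ψ' ν t x₀ β := by
  unfold cost
  simp_rw [h]

lemma value_congr_terminal {ν : ℕ → S → ℝ} (T₀ : ℕ)
    {ψ ψ' : S → (S → ℝ) → ℝ} (t : ℕ) (x₀ : S) (h : ∀ y, ψ y (ν T₀) = ψ' y (ν T₀)) :
    value q F T₀ ψ ν t x₀ = value q F T₀ ψ' ν t x₀ := by
  unfold value
  congr 1
  ext r
  constructor
  · rintro ⟨β, rfl⟩; exact ⟨β, cost_congr_terminal T₀ t x₀ h⟩
  · rintro ⟨β, rfl⟩; exact ⟨β, (cost_congr_terminal T₀ t x₀ h).symm⟩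

lemma cost_at_horizon {ν : ℕ → S → ℝ} {β : ℕ → S → A} (T₀ : ℕ) (ψ : S → (S → ℝ) → ℝ)
    (x : S) : cost q F T₀ ψ ν T₀ x β = ψ x (ν T₀) := by
  unfold cost
  rw [chain_start]
  simp [ite_mul, Finset.sum_ite_eq']

lemma chain_one_step {ν : ℕ → S → ℝ} {β : ℕ → S → A} (s : ℕ) (x : S) :
    chain q ν β s x (s+1) = q s x (ν s) (β s x) := by
  rw [chain_succ_gt ν β x (by omega)]
  funext y
  rw [chain_start]
  simp [ite_mul, Finset.sum_ite_eq']

lemma cost_decomp {ν : ℕ → S → ℝ} {β : ℕ → S → A} (T₀ T' : ℕ) (ψ : S → (S → ℝ) → ℝ)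
    (t : ℕ) (x₀ : S) (h1 : t ≤ T₀) (h2 : T₀ ≤ T') :
    cost q F T' ψ ν t x₀ β
      = cost q F T₀ (fun z _ => cost q F T' ψ ν T₀ z β) ν t x₀ β := by
  have key : ∀ s, T₀ ≤ s → ∀ f : S → ℝ,
      ∑ x, chain q ν β t x₀ s x * f x
        = ∑ z, chain q ν β t x₀ T₀ z * ∑ x, chain q ν β T₀ z s x * f x := by
    intro s hs f
    rw [chain_tower t T₀ x₀ h1 s hs]
    dsimp only
    simp_rw [Finset.sum_mul, mul_assoc]
    rw [Finset.sum_comm]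
    simp_rw [Finset.mul_sum]
  unfold cost
  rw [← Finset.sum_Ico_consecutive
        (fun s => ∑ x, chain q ν β t x₀ s x * F s x (ν s) (β s x)) h1 h2,
      key T' h2 (fun y => ψ y (ν T'))]
  rw [Finset.sum_congr rfl (fun s hs =>
    key s (Finset.mem_Ico.mp hs).1 (fun x => F s x (ν s) (β s x)))]
  have hrun : ∀ (c : S → ℝ) (R : S → ℕ → ℝ),
      ∑ s ∈ Finset.Ico T₀ T', ∑ z, c z * R z s
        = ∑ z, c z * ∑ s ∈ Finset.Ico T₀ T', R z s := by
    intro c R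
    rw [Finset.sum_comm]
    simp_rw [Finset.mul_sum]
  rw [hrun]
  dsimp only
  simp_rw [mul_add]
  rw [Finset.sum_add_distrib]
  ring

lemma cost_rec {ν : ℕ → S → ℝ} {β : ℕ → S → A} (T' : ℕ) (ψ : S → (S → ℝ) → ℝ)
    (s : ℕ) (x : S) (h : s < T') :
    cost q F T' ψ ν s x β
      = F s x (ν s) (β s x) + ∑ y, q s x (ν s) (β s x) y * cost q F T' ψ ν (s+1) y β := by
  rw [cost_decomp (s+1) T' ψ s x (by omega) h]
  conv_lhs => rw [cost]
  rw [Nat.Ico_succ_singleton, Finset.sum_singleton, chain_one_step, chain_start]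
  simp only [ite_mul, one_mul, zero_mul, Finset.sum_ite_eq', Finset.mem_univ, if_true]
  exact add_comm _ _

lemma inf'_le_prob_sum [Nonempty S] {p f : S → ℝ} (hp : IsProb p) :
    Finset.univ.inf' Finset.univ_nonempty f ≤ ∑ x, p x * f x := by
  calc Finset.univ.inf' Finset.univ_nonempty f
      = ∑ x, p x * Finset.univ.inf' Finset.univ_nonempty f := by
        rw [← Finset.sum_mul, hp.2, one_mul]
    _ ≤ ∑ x, p x * f x := Finset.sum_le_sum fun x _ =>
        mul_le_mul_of_nonneg_left (Finset.inf'_le f (Finset.mem_univ x)) (hp.1 x)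

lemma cost_bddBelow [Nonempty S]
    (hq0 : ∀ s x μ a y, IsProb μ → 0 < q s x μ a y)
    (hqsum : ∀ s x μ a, IsProb μ → ∑ y, q s x μ a y = 1)
    (hF : ∀ s x (μ' : S → ℝ), BddBelow (Set.range fun a : A => F s x μ' a))
    {ν : ℕ → S → ℝ} (hν : ∀ s, IsProb (ν s)) (T₀ : ℕ) (ψ : S → (S → ℝ) → ℝ)
    (t : ℕ) (x₀ : S) :
    ∃ B : ℝ, ∀ β : ℕ → S → A, B ≤ cost q F T₀ ψ ν t x₀ β := by
  refine ⟨Finset.univ.inf' Finset.univ_nonempty (fun x => ψ x (ν T₀))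
    + ∑ s ∈ Finset.Ico t T₀, Finset.univ.inf' Finset.univ_nonempty
        (fun x => sInf (Set.range fun a : A => F s x (ν s) a)), fun β => ?_⟩
  unfold cost
  refine add_le_add (inf'_le_prob_sum (chain_isProb hq0 hqsum hν β t x₀ T₀))
    (Finset.sum_le_sum fun s _ => ?_)
  calc Finset.univ.inf' Finset.univ_nonempty
        (fun x => sInf (Set.range fun a : A => F s x (ν s) a))
      ≤ ∑ x, chain q ν β t x₀ s x * sInf (Set.range fun a : A => F s x (ν s) a) :=
        inf'_le_prob_sum (chain_isProb hq0 hqsum hν β t x₀ s)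
    _ ≤ ∑ x, chain q ν β t x₀ s x * F s x (ν s) (β s x) :=
        Finset.sum_le_sum fun x _ => mul_le_mul_of_nonneg_left
          (csInf_le (hF s x (ν s)) ⟨β s x, rfl⟩)
          ((chain_isProb hq0 hqsum hν β t x₀ s).1 x)

lemma value_le [Nonempty S] [Nonempty A]
    (hq0 : ∀ s x μ a y, IsProb μ → 0 < q s x μ a y)
    (hqsum : ∀ s x μ a, IsProb μ → ∑ y, q s x μ a y = 1)
    (hF : ∀ s x (μ' : S → ℝ), BddBelow (Set.range fun a : A => F s x μ' a))
    {ν : ℕ → S → ℝ} (hν : ∀ s, IsProb (ν s)) (T₀ : ℕ) (ψ : S → (S → ℝ) → ℝ)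
    (t : ℕ) (x₀ : S) (β : ℕ → S → A) :
    value q F T₀ ψ ν t x₀ ≤ cost q F T₀ ψ ν t x₀ β := by
  obtain ⟨B, hB⟩ := cost_bddBelow hq0 hqsum hF hν T₀ ψ t x₀
  exact csInf_le ⟨B, by rintro r ⟨β', rfl⟩; exact hB β'⟩ ⟨β, rfl⟩

lemma le_value [Nonempty A] {ν : ℕ → S → ℝ} (T₀ : ℕ) (ψ : S → (S → ℝ) → ℝ)
    (t : ℕ) (x₀ : S) {c : ℝ} (h : ∀ β : ℕ → S → A, c ≤ cost q F T₀ ψ ν t x₀ β) :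
    c ≤ value q F T₀ ψ ν t x₀ :=
  le_csInf ⟨_, Classical.arbitrary (ℕ → S → A), rfl⟩ (by rintro r ⟨β, rfl⟩; exact h β)

/-- Backward (Bellman) value recursion: `bell q F T' ψ ν k x` is the optimal value at time
`T' - k` in state `x`, for the horizon-`T'` problem with terminal cost `ψ` and flow `ν`. -/
noncomputable def bell (q : ℕ → S → (S → ℝ) → A → S → ℝ) (F : ℕ → S → (S → ℝ) → A → ℝ)
    (T' : ℕ) (ψ : S → (S → ℝ) → ℝ) (ν : ℕ → S → ℝ) : ℕ → S → ℝ
  | 0 => fun x => ψ x (ν T')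
  | (k+1) => fun x => sInf {r : ℝ | ∃ a : A,
      r = F (T'-(k+1)) x (ν (T'-(k+1))) a
        + ∑ y, q (T'-(k+1)) x (ν (T'-(k+1))) a y * bell q F T' ψ ν k y}

lemma bell_zero (T' : ℕ) (ψ : S → (S → ℝ) → ℝ) (ν : ℕ → S → ℝ) (x : S) :
    bell q F T' ψ ν 0 x = ψ x (ν T') := rfl

lemma bell_succ (T' : ℕ) (ψ : S → (S → ℝ) → ℝ) (ν : ℕ → S → ℝ) (k : ℕ) (x : S) :
    bell q F T' ψ ν (k+1) x = sInf {r : ℝ | ∃ a : A,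
      r = F (T'-(k+1)) x (ν (T'-(k+1))) a
        + ∑ y, q (T'-(k+1)) x (ν (T'-(k+1))) a y * bell q F T' ψ ν k y} := rfl

lemma step_bddBelow [Nonempty S]
    (hq0 : ∀ s x μ a y, IsProb μ → 0 < q s x μ a y)
    (hqsum : ∀ s x μ a, IsProb μ → ∑ y, q s x μ a y = 1)
    (hF : ∀ s x (μ' : S → ℝ), BddBelow (Set.range fun a : A => F s x μ' a))
    {μ' : S → ℝ} (hμ' : IsProb μ') (s : ℕ) (x : S) (g : S → ℝ) :
    BddBelow {r : ℝ | ∃ a : A, r = F s x μ' a + ∑ y, q s x μ' a y * g y} := by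
  refine ⟨sInf (Set.range fun a : A => F s x μ' a)
    + Finset.univ.inf' Finset.univ_nonempty g, ?_⟩
  rintro r ⟨a, rfl⟩
  exact add_le_add (csInf_le (hF s x μ') ⟨a, rfl⟩)
    (inf'_le_prob_sum ⟨fun y => (hq0 s x μ' a y hμ').le, hqsum s x μ' a hμ'⟩)

lemma bell_le_cost [Nonempty S]
    (hq0 : ∀ s x μ a y, IsProb μ → 0 < q s x μ a y)
    (hqsum : ∀ s x μ a, IsProb μ → ∑ y, q s x μ a y = 1)
    (hF : ∀ s x (μ' : S → ℝ), BddBelow (Set.range fun a : A => F s x μ' a))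
    {ν : ℕ → S → ℝ} (hν : ∀ s, IsProb (ν s)) (T' : ℕ) (ψ : S → (S → ℝ) → ℝ)
    (β : ℕ → S → A) :
    ∀ k, k ≤ T' → ∀ x, bell q F T' ψ ν k x ≤ cost q F T' ψ ν (T'-k) x β
  | 0, _, x => by
    rw [bell_zero, Nat.sub_zero, cost_at_horizon]
  | (k+1), h, x => by
    have hs : T' - (k+1) < T' := by omega
    have hsk : T' - k = (T' - (k+1)) + 1 := by omega
    rw [bell_succ, cost_rec T' ψ _ x hs]
    refine le_trans (csInf_le (step_bddBelow hq0 hqsum hF (hν _) _ x _)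
      ⟨β (T'-(k+1)) x, rfl⟩) ?_
    refine add_le_add le_rfl (Finset.sum_le_sum fun y _ => mul_le_mul_of_nonneg_left ?_
      (hq0 _ x _ _ y (hν _)).le)
    have := bell_le_cost hq0 hqsum hF hν T' ψ β k (by omega) y
    rwa [hsk] at this

lemma exists_eps_opt [Nonempty S] [Nonempty A]
    (hq0 : ∀ s x μ a y, IsProb μ → 0 < q s x μ a y)
    (hqsum : ∀ s x μ a, IsProb μ → ∑ y, q s x μ a y = 1)
    (hF : ∀ s x (μ' : S → ℝ), BddBelow (Set.range fun a : A => F s x μ' a))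
    {ν : ℕ → S → ℝ} (hν : ∀ s, IsProb (ν s)) (T' : ℕ) (ψ : S → (S → ℝ) → ℝ)
    {δ : ℝ} (hδ : 0 < δ) :
    ∃ β : ℕ → S → A, ∀ k, k ≤ T' → ∀ x,
      cost q F T' ψ ν (T'-k) x β ≤ bell q F T' ψ ν k x + (k : ℝ) * δ := by
  have key : ∀ s x, ∃ a : A, s < T' →
      F s x (ν s) a + ∑ y, q s x (ν s) a y * bell q F T' ψ ν (T' - s - 1) y
        < bell q F T' ψ ν (T' - s) x + δ := by
    intro s x
    by_cases hs : s < T'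
    · have h1 : T' - s = (T' - s - 1) + 1 := by omega
      have h2 : T' - ((T' - s - 1) + 1) = s := by omega
      have hbe : bell q F T' ψ ν (T' - s) x = sInf {r : ℝ | ∃ a : A,
          r = F s x (ν s) a + ∑ y, q s x (ν s) a y * bell q F T' ψ ν (T' - s - 1) y} := by
        rw [h1, bell_succ, Nat.add_sub_cancel, h2]
      have hne : ({r : ℝ | ∃ a : A,
          r = F s x (ν s) a + ∑ y, q s x (ν s) a y * bell q F T' ψ ν (T' - s - 1) y}).Nonempty :=
        ⟨_, Classical.arbitrary A, rfl⟩
      have hlt : sInf {r : ℝ | ∃ a : A,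
          r = F s x (ν s) a + ∑ y, q s x (ν s) a y * bell q F T' ψ ν (T' - s - 1) y}
          < bell q F T' ψ ν (T' - s) x + δ := by
        rw [← hbe]; exact lt_add_of_pos_right _ hδ
      obtain ⟨r, ⟨a, rfl⟩, hr⟩ := exists_lt_of_csInf_lt hne hlt
      exact ⟨a, fun _ => hr⟩
    · exact ⟨Classical.arbitrary A, fun h => absurd h hs⟩
  choose β hβ using key
  refine ⟨β, ?_⟩
  intro k
  induction k with
  | zero =>
    intro _ x
    rw [Nat.sub_zero, cost_at_horizon, bell_zero]
    simp
  | succ k ih =>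
    intro hk x
    have hs : T' - (k+1) < T' := by omega
    have e1 : T' - (T' - (k+1)) = k+1 := by omega
    have e3 : T' - k = (T' - (k+1)) + 1 := by omega
    rw [cost_rec T' ψ _ x hs]
    have h := hβ (T' - (k+1)) x hs
    rw [e1, Nat.add_sub_cancel] at h
    have step1 : ∑ y, q (T'-(k+1)) x (ν (T'-(k+1))) (β (T'-(k+1)) x) y
          * cost q F T' ψ ν (T' - (k+1) + 1) y β
        ≤ ∑ y, q (T'-(k+1)) x (ν (T'-(k+1))) (β (T'-(k+1)) x) y
          * (bell q F T' ψ ν k y + (k : ℝ) * δ) := by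
      refine Finset.sum_le_sum fun y _ => mul_le_mul_of_nonneg_left ?_
        (hq0 _ x _ _ y (hν _)).le
      rw [← e3]
      exact ih (by omega) y
    have step2 : ∑ y, q (T'-(k+1)) x (ν (T'-(k+1))) (β (T'-(k+1)) x) y
          * (bell q F T' ψ ν k y + (k : ℝ) * δ)
        = (∑ y, q (T'-(k+1)) x (ν (T'-(k+1))) (β (T'-(k+1)) x) y * bell q F T' ψ ν k y)
          + (k : ℝ) * δ := by
      simp_rw [mul_add]
      rw [Finset.sum_add_distrib, ← Finset.sum_mul, hqsum _ x _ _ (hν _), one_mul]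
    have : ((k:ℝ)+1) * δ = δ + (k:ℝ) * δ := by ring
    push_cast
    rw [this]
    linarith

lemma value_eq_bell [Nonempty S] [Nonempty A]
    (hq0 : ∀ s x μ a y, IsProb μ → 0 < q s x μ a y)
    (hqsum : ∀ s x μ a, IsProb μ → ∑ y, q s x μ a y = 1)
    (hF : ∀ s x (μ' : S → ℝ), BddBelow (Set.range fun a : A => F s x μ' a))
    {ν : ℕ → S → ℝ} (hν : ∀ s, IsProb (ν s)) (T' : ℕ) (ψ : S → (S → ℝ) → ℝ)
    (t : ℕ) (ht : t ≤ T') (x : S) :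
    value q F T' ψ ν t x = bell q F T' ψ ν (T' - t) x := by
  have e : T' - (T' - t) = t := by omega
  apply le_antisymm
  · refine le_of_forall_pos_le_add fun ε hε => ?_
    obtain ⟨β, hβ⟩ := exists_eps_opt hq0 hqsum hF hν T' ψ
      (δ := ε / ((T' : ℝ) + 1)) (by positivity)
    have h := hβ (T' - t) (by omega) x
    rw [e] at h
    refine le_trans (value_le hq0 hqsum hF hν T' ψ t x β) (le_trans h ?_)
    have hk : ((T' - t : ℕ) : ℝ) ≤ (T' : ℝ) + 1 := by
      have : ((T' - t : ℕ) : ℝ) ≤ (T' : ℕ) := Nat.cast_le.mpr (by omega)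
      linarith
    have hTpos : (0:ℝ) < (T' : ℝ) + 1 := by positivity
    have : ((T' - t : ℕ) : ℝ) * (ε / ((T' : ℝ) + 1)) ≤ ε := by
      calc ((T' - t : ℕ) : ℝ) * (ε / ((T' : ℝ) + 1))
          ≤ ((T' : ℝ) + 1) * (ε / ((T' : ℝ) + 1)) := by
            exact mul_le_mul_of_nonneg_right hk (by positivity)
        _ = ε := by field_simp
    linarith
  · refine le_value T' ψ t x fun β => ?_
    have := bell_le_cost hq0 hqsum hF hν T' ψ β (T' - t) (by omega) x
    rwa [e] at this

lemma bell_shift (T₀ T' : ℕ) (h2 : T₀ ≤ T') (ψ ψ' : S → (S → ℝ) → ℝ) (ν : ℕ → S → ℝ)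
    (hψ : ∀ z, ψ' z (ν T₀) = bell q F T' ψ ν (T' - T₀) z) :
    ∀ k, k ≤ T₀ → ∀ x, bell q F T₀ ψ' ν k x = bell q F T' ψ ν (k + (T' - T₀)) x
  | 0, _, x => by rw [bell_zero, zero_add]; exact hψ x
  | (k+1), h, x => by
    have ih := bell_shift T₀ T' h2 ψ ψ' ν hψ k (by omega)
    rw [show k+1+(T'-T₀) = (k+(T'-T₀))+1 from by omega, bell_succ, bell_succ]
    rw [show T' - (k+(T'-T₀)+1) = T₀ - (k+1) from by omega]
    congr 1
    ext r
    simp only [Set.mem_setOf_eq]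
    simp_rw [ih]

lemma cost_terminal_diff {ν : ℕ → S → ℝ} (T₀ : ℕ) (φ φ' : S → (S → ℝ) → ℝ)
    (t : ℕ) (x₀ : S) (β : ℕ → S → A) :
    cost q F T₀ φ ν t x₀ β - cost q F T₀ φ' ν t x₀ β
      = ∑ z, chain q ν β t x₀ T₀ z * (φ z (ν T₀) - φ' z (ν T₀)) := by
  unfold cost
  simp_rw [mul_sub]
  rw [Finset.sum_sub_distrib]
  ring

lemma exists_eps_opt' [Nonempty S] [Nonempty A]
    (hq0 : ∀ s x μ a y, IsProb μ → 0 < q s x μ a y)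
    (hqsum : ∀ s x μ a, IsProb μ → ∑ y, q s x μ a y = 1)
    (hF : ∀ s x (μ' : S → ℝ), BddBelow (Set.range fun a : A => F s x μ' a))
    {ν : ℕ → S → ℝ} (hν : ∀ s, IsProb (ν s)) (T' T₀ : ℕ) (hT : T₀ ≤ T')
    (ψ : S → (S → ℝ) → ℝ) {ε : ℝ} (hε : 0 < ε) :
    ∃ γ : ℕ → S → A, ∀ z,
      cost q F T' ψ ν T₀ z γ ≤ bell q F T' ψ ν (T' - T₀) z + ε := by
  obtain ⟨γ, hγ⟩ := exists_eps_opt hq0 hqsum hF hν T' ψ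
    (δ := ε / ((T' : ℝ) + 1)) (by positivity)
  refine ⟨γ, fun z => ?_⟩
  have h := hγ (T' - T₀) (by omega) z
  rw [show T' - (T' - T₀) = T₀ from by omega] at h
  have hk : ((T' - T₀ : ℕ) : ℝ) ≤ (T' : ℝ) + 1 := by
    have : ((T' - T₀ : ℕ) : ℝ) ≤ (T' : ℕ) := Nat.cast_le.mpr (by omega)
    linarith
  have : ((T' - T₀ : ℕ) : ℝ) * (ε / ((T' : ℝ) + 1)) ≤ ε := by
    calc ((T' - T₀ : ℕ) : ℝ) * (ε / ((T' : ℝ) + 1))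
        ≤ ((T' : ℝ) + 1) * (ε / ((T' : ℝ) + 1)) :=
          mul_le_mul_of_nonneg_right hk (by positivity)
      _ = ε := by field_simp
  linarith

lemma abstract_equiv [Nonempty S] [Nonempty A]
    (hq0 : ∀ s x μ a y, IsProb μ → 0 < q s x μ a y)
    (hqsum : ∀ s x μ a, IsProb μ → ∑ y, q s x μ a y = 1)
    (hF : ∀ s x (μ' : S → ℝ), BddBelow (Set.range fun a : A => F s x μ' a))
    {ν : ℕ → S → ℝ} (hν : ∀ s, IsProb (ν s))
    (T' T₀ t : ℕ) (htT₀ : t < T₀) (hT₀T' : T₀ ≤ T')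
    (ψ : S → (S → ℝ) → ℝ) (β : ℕ → S → A) :
    (∀ x, cost q F T' ψ ν t x β = value q F T' ψ ν t x) ↔
      ((∀ x, cost q F T₀ (fun y _ => cost q F T' ψ ν T₀ y β) ν t x β
          = value q F T₀ (fun y _ => cost q F T' ψ ν T₀ y β) ν t x)
        ∧ (∀ x, cost q F T' ψ ν T₀ x β = value q F T' ψ ν T₀ x)) := by
  have ht' : t ≤ T' := by omega
  constructor
  · intro H
    -- first establish: the tail cost of β equals the optimal tail value
    have hge : ∀ z, bell q F T' ψ ν (T' - T₀) z ≤ cost q F T' ψ ν T₀ z β := by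
      intro z
      have := bell_le_cost hq0 hqsum hF hν T' ψ β (T' - T₀) (by omega) z
      rwa [show T' - (T' - T₀) = T₀ from by omega] at this
    have key : ∀ z, cost q F T' ψ ν T₀ z β = bell q F T' ψ ν (T' - T₀) z := by
      have x0 : S := Classical.arbitrary S
      set c := chain q ν β t x0 T₀ with hc
      have hcprob : IsProb c := chain_isProb hq0 hqsum hν β t x0 T₀
      have main : ∀ ε : ℝ, 0 < ε →
          ∑ z, c z * (cost q F T' ψ ν T₀ z β - bell q F T' ψ ν (T' - T₀) z) ≤ 0 + ε := by
        intro ε hε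
        obtain ⟨γ, hγ⟩ := exists_eps_opt' hq0 hqsum hF hν T' T₀ hT₀T' ψ hε
        have eβ : cost q F T' ψ ν t x0 β
            = cost q F T₀ (fun z _ => cost q F T' ψ ν T₀ z β) ν t x0 β :=
          cost_decomp T₀ T' ψ t x0 htT₀.le hT₀T'
        have eγ : cost q F T' ψ ν t x0 (concat T₀ β γ)
            = cost q F T₀ (fun z _ => cost q F T' ψ ν T₀ z γ) ν t x0 β := by
          rw [cost_decomp T₀ T' ψ t x0 htT₀.le hT₀T',
            cost_congr T₀ _ t x0 (fun s _ hs' => concat_lt β γ hs')]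
          exact cost_congr_terminal T₀ t x0
            (fun y => cost_congr T' ψ T₀ y (fun s hs _ => concat_ge β γ hs))
        have hle : cost q F T' ψ ν t x0 β ≤ cost q F T' ψ ν t x0 (concat T₀ β γ) := by
          rw [H x0]; exact value_le hq0 hqsum hF hν T' ψ t x0 _
        have h1 : ∑ z, c z * (cost q F T' ψ ν T₀ z β - cost q F T' ψ ν T₀ z γ) ≤ 0 := by
          have := cost_terminal_diff (q := q) (F := F) (ν := ν) T₀ (fun z _ => cost q F T' ψ ν T₀ z β)
            (fun z _ => cost q F T' ψ ν T₀ z γ) t x0 β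
          rw [← hc] at this
          rw [← this, ← eβ, ← eγ]
          linarith
        have h2 : ∑ z, c z * (cost q F T' ψ ν T₀ z γ - bell q F T' ψ ν (T' - T₀) z)
            ≤ ∑ z, c z * ε :=
          Finset.sum_le_sum fun z _ => mul_le_mul_of_nonneg_left
            (by linarith [hγ z]) (hcprob.1 z)
        have h3 : ∑ z, c z * ε = ε := by rw [← Finset.sum_mul, hcprob.2, one_mul]
        have h4 : ∑ z, c z * (cost q F T' ψ ν T₀ z β - bell q F T' ψ ν (T' - T₀) z)
            = ∑ z, (c z * (cost q F T' ψ ν T₀ z β - cost q F T' ψ ν T₀ z γ)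
              + c z * (cost q F T' ψ ν T₀ z γ - bell q F T' ψ ν (T' - T₀) z)) :=
          Finset.sum_congr rfl fun z _ => by ring
        rw [h4, Finset.sum_add_distrib]
        linarith
      have hsum0 : ∑ z, c z * (cost q F T' ψ ν T₀ z β - bell q F T' ψ ν (T' - T₀) z) = 0 := by
        refine le_antisymm (by simpa using le_of_forall_pos_le_add main) ?_
        exact Finset.sum_nonneg fun z _ => mul_nonneg (hcprob.1 z) (by linarith [hge z])
      intro z
      have hz := (Finset.sum_eq_zero_iff_of_nonneg
        (fun z _ => mul_nonneg (hcprob.1 z) (by linarith [hge z]))).mp hsum0 z (Finset.mem_univ z)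
      have hcz : 0 < c z := chain_pos hq0 hqsum hν β t x0 T₀ htT₀ z
      have := mul_eq_zero.mp hz
      rcases this with h | h
      · exact absurd h (ne_of_gt hcz)
      · linarith
    constructor
    · intro x
      have lhs : cost q F T₀ (fun y _ => cost q F T' ψ ν T₀ y β) ν t x β
          = bell q F T' ψ ν (T' - t) x := by
        rw [← cost_decomp T₀ T' ψ t x htT₀.le hT₀T', H x,
          value_eq_bell hq0 hqsum hF hν T' ψ t ht' x]
      rw [lhs, value_eq_bell hq0 hqsum hF hν T₀ _ t htT₀.le x,
        bell_shift T₀ T' hT₀T' ψ (fun y _ => cost q F T' ψ ν T₀ y β) ν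
          (fun z => key z) (T₀ - t) (by omega) x,
        show T₀ - t + (T' - T₀) = T' - t from by omega]
    · intro x
      rw [value_eq_bell hq0 hqsum hF hν T' ψ T₀ hT₀T' x]
      exact key x
  · rintro ⟨h1, h2⟩ x
    rw [cost_decomp T₀ T' ψ t x htT₀.le hT₀T', h1 x,
      value_eq_bell hq0 hqsum hF hν T₀ _ t htT₀.le x,
      value_eq_bell hq0 hqsum hF hν T' ψ t ht' x]
    have hψ : ∀ z, (fun y (_ : S → ℝ) => cost q F T' ψ ν T₀ y β) z (ν T₀)
        = bell q F T' ψ ν (T' - T₀) z := by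
      intro z
      dsimp only
      rw [h2 z, value_eq_bell hq0 hqsum hF hν T' ψ T₀ hT₀T' z]
    rw [bell_shift T₀ T' hT₀T' ψ _ ν hψ (T₀ - t) (by omega) x,
      show T₀ - t + (T' - T₀) = T' - t from by omega]

end Aux
end MFGSetValue

open MFGSetValue

/-- Proposition 2.3.  Fix `0 ≤ t < T₀ ≤ T` and `μ ∈ 𝒫₀(𝕊)`.  For any
`α*, α̃* ∈ 𝒜_state`, set `α̂* := α* ⊕_{T₀} α̃*` and `ψ(y,ν) := J(T₀,ν,α̃*;y,α̃*)`.
Then `α̂* ∈ ℳ_state(t,μ)` iff `α* ∈ ℳ_state(T₀,ψ;t,μ)` and `α̃* ∈ ℳ_state(T₀, μ^{α*}_{T₀})`. -/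
theorem mfe_time_consistency
    {S A : Type*} [Fintype S] [DecidableEq S] [Nonempty A]
    (T : ℕ) (q : ℕ → S → (S → ℝ) → A → S → ℝ)
    (F : ℕ → S → (S → ℝ) → A → ℝ) (G : S → (S → ℝ) → ℝ)
    (hq0 : ∀ s x μ a y, IsProb μ → 0 < q s x μ a y)
    (hq1 : ∀ s x μ a y, IsProb μ → q s x μ a y < 1)
    (hqsum : ∀ s x μ a, IsProb μ → ∑ y, q s x μ a y = 1)
    (hF : ∀ s x (μ : S → ℝ), BddBelow (Set.range fun a : A => F s x μ a))
    (t T₀ : ℕ) (htT₀ : t < T₀) (hT₀T : T₀ ≤ T)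
    (μ : S → ℝ) (hμ : IsProb μ) (hμfull : ∀ x, 0 < μ x)
    (αstar αtstar : ℕ → S → A) :
    isMFE q F T G t μ (concat T₀ αstar αtstar) ↔
      (isMFE q F T₀ (fun y ν => cost q F T G (flow q αtstar T₀ ν) T₀ y αtstar) t μ αstar ∧
        isMFE q F T G T₀ (flow q αstar t μ T₀) αtstar) := by
  classical
  have hS : Nonempty S := by
    by_contra h
    rw [not_nonempty_iff] at h
    have h2 := hμ.2
    rw [Finset.univ_eq_empty, Finset.sum_empty] at h2
    norm_num at h2
  unfold isMFE
  set αh := concat T₀ αstar αtstar with hαh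
  set νL := flow q αh t μ with hνL
  have hνLprob : ∀ s, IsProb (νL s) := flow_isProb hq0 hqsum hμ αh t
  have E1 : ∀ s, s ≤ T₀ → flow q αstar t μ s = νL s := by
    intro s hs
    exact flow_congr t s (fun u _ hu' => (concat_lt αstar αtstar (by omega)).symm)
  have E2 : ∀ s, T₀ ≤ s → flow q αtstar T₀ (flow q αstar t μ T₀) s = νL s := fun s hs =>
    flow_shift αstar αtstar t T₀ htT₀.le s hs
  have c2 : ∀ x, cost q F T G (flow q αtstar T₀ (flow q αstar t μ T₀)) T₀ x αtstar
      = cost q F T G νL T₀ x αh := by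
    intro x
    rw [cost_congr_nu (q := q) (F := F) T G T₀ x hT₀T (fun s hs _ => E2 s hs)]
    exact cost_congr T G T₀ x (fun s hs _ => (concat_ge αstar αtstar hs).symm)
  have v2 : ∀ x, value q F T G (flow q αtstar T₀ (flow q αstar t μ T₀)) T₀ x
      = value q F T G νL T₀ x := fun x =>
    value_congr_nu (q := q) (F := F) T G T₀ x hT₀T (fun s hs _ => E2 s hs)
  have hterm : ∀ y, (fun y ν => cost q F T G (flow q αtstar T₀ ν) T₀ y αtstar) y (νL T₀)
      = (fun y (_ : S → ℝ) => cost q F T G νL T₀ y αh) y (νL T₀) := by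
    intro y
    dsimp only
    rw [← E1 T₀ le_rfl]
    exact c2 y
  have c1 : ∀ x, cost q F T₀ (fun y ν => cost q F T G (flow q αtstar T₀ ν) T₀ y αtstar)
      (flow q αstar t μ) t x αstar
      = cost q F T₀ (fun y _ => cost q F T G νL T₀ y αh) νL t x αh := by
    intro x
    rw [cost_congr_nu (q := q) (F := F) T₀ _ t x htT₀.le (fun s _ hs' => E1 s hs'),
        cost_congr_terminal (q := q) (F := F) (ν := νL)
          (ψ := fun y ν => cost q F T G (flow q αtstar T₀ ν) T₀ y αtstar)
          (ψ' := fun y _ => cost q F T G νL T₀ y αh) T₀ t x hterm]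
    exact cost_congr T₀ _ t x (fun s _ hs' => (concat_lt αstar αtstar hs').symm)
  have v1 : ∀ x, value q F T₀ (fun y ν => cost q F T G (flow q αtstar T₀ ν) T₀ y αtstar)
      (flow q αstar t μ) t x
      = value q F T₀ (fun y _ => cost q F T G νL T₀ y αh) νL t x := by
    intro x
    rw [value_congr_nu (q := q) (F := F) T₀ _ t x htT₀.le (fun s _ hs' => E1 s hs'),
        value_congr_terminal (q := q) (F := F) (ν := νL)
          (ψ := fun y ν => cost q F T G (flow q αtstar T₀ ν) T₀ y αtstar)
          (ψ' := fun y _ => cost q F T G νL T₀ y αh) T₀ t x hterm]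
  have main := abstract_equiv hq0 hqsum hF hνLprob T T₀ t htT₀ hT₀T G αh
  refine main.trans (and_congr ?_ ?_)
  · exact (forall_congr' fun x => by rw [c1 x, v1 x]).symm
  · exact (forall_congr' fun x => by rw [c2 x, v2 x]).symm
end

section
/- For any 0 ≤ t < T₀ ≤ T and μ ∈ 𝒫₀(𝕊), the raw set value satisfies the dynamic programming principle: V₀(t,μ) = { J(T₀,ψ;t,μ,α*;·,α*) : ψ: 𝕊×𝒫₀(𝕊) → ℝ and α* ∈ 𝒜_state such that ψ(·,μ^{α*}_{T₀}) ∈ V₀(T₀,μ^{α*}_{T₀}) and α* ∈ ℳ_state(T₀,ψ;t,μ) }. -/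
/-!
Statement 0 (Proposition 2.3, time consistency of state-dependent MFE).

Discrete-time finite-state mean field game.  Time set `𝕋 = {0,…,T}` (we use `ℕ` and
restrict attention to times `≤ T`), finite state space `S`, control set `A`.
Probability measures on `S` are encoded as functions `S → ℝ` satisfying `IsProb`.
-/

open Finset
set_option linter.unusedSectionVars false

open MFGSetValue

namespace MFGSetValue

variable {S A : Type*} [Fintype S] [DecidableEq S]

/-- The raw set value `𝕍₀(t,μ)` of the mean field game: the set of value functions
`J(t,μ,α*;·,α*) : 𝕊 → ℝ` over all state-dependent MFE `α* ∈ ℳ_state(t,μ)`. -/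
noncomputable def rawSetValue (q : ℕ → S → (S → ℝ) → A → S → ℝ)
    (F : ℕ → S → (S → ℝ) → A → ℝ) (G : S → (S → ℝ) → ℝ)
    (T : ℕ) (t : ℕ) (μ : S → ℝ) : Set (S → ℝ) :=
  { φ | ∃ α : ℕ → S → A, isMFE q F T G t μ α ∧
      φ = fun x => cost q F T G (flow q α t μ) t x α }

end MFGSetValue

namespace MFGDPP

open MFGSetValue

variable {S A : Type*} [Fintype S] [DecidableEq S]

section Defs

variable (q : ℕ → S → (S → ℝ) → A → S → ℝ) (F : ℕ → S → (S → ℝ) → A → ℝ)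

/-- Backward value iteration, counting `k` steps back from horizon `T₀`. -/
noncomputable def aux (T₀ : ℕ) (g : S → ℝ) (ν : ℕ → S → ℝ) : ℕ → S → ℝ
  | 0 => g
  | k + 1 => fun x => sInf {r : ℝ | ∃ a : A, r = F (T₀ - (k+1)) x (ν (T₀ - (k+1))) a +
      ∑ y, q (T₀ - (k+1)) x (ν (T₀ - (k+1))) a y * aux T₀ g ν k y}

/-- The backward dynamic-programming value function. -/
noncomputable def bw (T₀ : ℕ) (g : S → ℝ) (ν : ℕ → S → ℝ) (s : ℕ) : S → ℝ :=
  aux q F T₀ g ν (T₀ - s)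

end Defs

variable {q : ℕ → S → (S → ℝ) → A → S → ℝ} {F : ℕ → S → (S → ℝ) → A → ℝ}

lemma bw_term (T₀ : ℕ) (g : S → ℝ) (ν : ℕ → S → ℝ) {s : ℕ} (h : T₀ ≤ s) :
    bw q F T₀ g ν s = g := by
  unfold bw
  rw [Nat.sub_eq_zero_of_le h]
  rfl

lemma bw_rec (T₀ : ℕ) (g : S → ℝ) (ν : ℕ → S → ℝ) {s : ℕ} (h : s < T₀) (x : S) :
    bw q F T₀ g ν s x = sInf {r : ℝ | ∃ a : A, r = F s x (ν s) a +
      ∑ y, q s x (ν s) a y * bw q F T₀ g ν (s+1) y} := by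
  have h1 : T₀ - s = (T₀ - (s+1)) + 1 := by omega
  have h2 : T₀ - ((T₀ - (s+1)) + 1) = s := by omega
  show aux q F T₀ g ν (T₀ - s) x = _
  rw [h1]
  show sInf _ = _
  rw [h2]
  rfl

section Flow

variable (hq0 : ∀ s x (μ : S → ℝ) a y, IsProb μ → 0 < q s x μ a y)
variable (hqsum : ∀ s x (μ : S → ℝ) a, IsProb μ → ∑ y, q s x μ a y = 1)

lemma flow_succ (α : ℕ → S → A) (t : ℕ) (μ : S → ℝ) (s : ℕ) :
    flow q α t μ (s+1) = if s + 1 ≤ t then μ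
      else fun y => ∑ x, flow q α t μ s x * q s x (flow q α t μ s) (α s x) y := rfl

include hq0 hqsum in
lemma isProb_flow (α : ℕ → S → A) (t : ℕ) {μ : S → ℝ} (hμ : IsProb μ) :
    ∀ s, IsProb (flow q α t μ s) := by
  intro s
  induction s with
  | zero => exact hμ
  | succ s ih =>
    rw [flow_succ]
    split
    · exact hμ
    · constructor
      · intro y
        exact Finset.sum_nonneg fun x _ =>
          mul_nonneg (ih.1 x) (le_of_lt (hq0 s x _ (α s x) y ih))
      · rw [Finset.sum_comm]
        calc (∑ x, ∑ y, flow q α t μ s x * q s x (flow q α t μ s) (α s x) y)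
            = ∑ x, flow q α t μ s x * ∑ y, q s x (flow q α t μ s) (α s x) y := by
              simp [Finset.mul_sum]
          _ = 1 := by
              rw [← ih.2]
              exact Finset.sum_congr rfl fun x _ => by rw [hqsum s x _ (α s x) ih, mul_one]

lemma flow_congr_alpha (α α' : ℕ → S → A) (t : ℕ) (μ : S → ℝ) :
    ∀ s, (∀ r, r < s → α r = α' r) → flow q α t μ s = flow q α' t μ s := by
  intro s
  induction s with
  | zero => intro _; rfl
  | succ s ih =>
    intro h
    have hs : flow q α t μ s = flow q α' t μ s := ih fun r hr => h r (Nat.lt_succ_of_lt hr)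
    rw [flow_succ, flow_succ, hs, h s (Nat.lt_succ_self s)]

lemma flow_shift (α : ℕ → S → A) (t T₀ : ℕ) (μ : S → ℝ) (htT : t ≤ T₀) :
    ∀ s, T₀ ≤ s → flow q α T₀ (flow q α t μ T₀) s = flow q α t μ s := by
  intro s
  induction s with
  | zero =>
    intro h
    have : T₀ = 0 := Nat.le_zero.mp h
    subst this; rfl
  | succ s ih =>
    intro h
    rcases Nat.lt_or_ge T₀ (s+1) with h1 | h1
    · have hs : T₀ ≤ s := by omega
      have := ih hs
      rw [flow_succ, flow_succ, if_neg (by omega), if_neg (by omega), this]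
    · have : T₀ = s + 1 := le_antisymm h h1
      subst this
      rw [flow_succ, if_pos (le_refl _)]

lemma flow_concat_ge (α β : ℕ → S → A) (t T₀ : ℕ) (μ : S → ℝ) (htT : t ≤ T₀) :
    ∀ s, T₀ ≤ s → flow q (concat T₀ α β) t μ s = flow q β T₀ (flow q α t μ T₀) s := by
  have hlow : ∀ s, s ≤ T₀ → flow q (concat T₀ α β) t μ s = flow q α t μ s := by
    intro s hs
    exact flow_congr_alpha _ _ _ _ s fun r hr => by
      funext x; simp [concat, if_pos (lt_of_lt_of_le hr hs)]
  intro s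
  induction s with
  | zero =>
    intro h
    have h0 : T₀ = 0 := Nat.le_zero.mp h
    subst h0
    exact (hlow 0 (le_refl _)).trans rfl
  | succ s ih =>
    intro h
    rcases Nat.lt_or_ge T₀ (s+1) with h1 | h1
    · have hs : T₀ ≤ s := by omega
      have hih := ih hs
      rw [flow_succ, flow_succ, if_neg (by omega), if_neg (by omega), hih]
      have hcb : concat T₀ α β s = β s := by
        funext x; simp [concat, if_neg (by omega : ¬ s < T₀)]
      rw [hcb]
    · have hT : T₀ = s + 1 := le_antisymm h h1
      rw [hlow (s+1) (le_of_eq hT.symm)]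
      subst hT
      rw [flow_succ β (s+1) (flow q α t μ (s+1)) s, if_pos (le_refl (s+1))]

end Flow

section Chain

lemma chain_le (ν : ℕ → S → ℝ) (αt : ℕ → S → A) (t : ℕ) (x₀ : S) {s : ℕ} (h : s ≤ t) :
    chain q ν αt t x₀ s = fun x => if x = x₀ then 1 else 0 := by
  cases s with
  | zero => rfl
  | succ s => rw [chain, if_pos h]

lemma chain_succ (ν : ℕ → S → ℝ) (αt : ℕ → S → A) (t : ℕ) (x₀ : S) {s : ℕ} (h : t ≤ s) :
    chain q ν αt t x₀ (s+1) =
      fun y => ∑ x, chain q ν αt t x₀ s x * q s x (ν s) (αt s x) y := by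
  rw [chain, if_neg (by omega)]

variable (hq0 : ∀ s x (μ : S → ℝ) a y, IsProb μ → 0 < q s x μ a y)
variable (hqsum : ∀ s x (μ : S → ℝ) a, IsProb μ → ∑ y, q s x μ a y = 1)
variable {ν : ℕ → S → ℝ} (hν : ∀ s, IsProb (ν s))

include hq0 hν in
lemma chain_nonneg (αt : ℕ → S → A) (t : ℕ) (x₀ : S) :
    ∀ s x, 0 ≤ chain q ν αt t x₀ s x := by
  intro s
  induction s with
  | zero => intro x; dsimp [chain]; split <;> norm_num
  | succ s ih =>
    intro x
    rcases Nat.lt_or_ge s t with h | h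
    · rw [chain_le ν αt t x₀ (by omega : s + 1 ≤ t)]
      dsimp only; split <;> norm_num
    · rw [chain_succ ν αt t x₀ h]
      exact Finset.sum_nonneg fun y _ =>
        mul_nonneg (ih y) (le_of_lt (hq0 s y (ν s) (αt s y) x (hν s)))

include hqsum hν in
lemma chain_sum (αt : ℕ → S → A) (t : ℕ) (x₀ : S) :
    ∀ s, ∑ x, chain q ν αt t x₀ s x = 1 := by
  intro s
  induction s with
  | zero => simp [chain]
  | succ s ih =>
    rcases Nat.lt_or_ge s t with h | h
    · rw [chain_le ν αt t x₀ (by omega : s + 1 ≤ t)]; simp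
    · rw [chain_succ ν αt t x₀ h]
      rw [Finset.sum_comm]
      calc (∑ x, ∑ y, chain q ν αt t x₀ s x * q s x (ν s) (αt s x) y)
          = ∑ x, chain q ν αt t x₀ s x * ∑ y, q s x (ν s) (αt s x) y := by
            simp [Finset.mul_sum]
        _ = 1 := by
            rw [← ih]
            exact Finset.sum_congr rfl fun x _ => by rw [hqsum s x (ν s) (αt s x) (hν s), mul_one]

include hq0 hqsum hν in
lemma chain_pos (αt : ℕ → S → A) (t : ℕ) (x₀ : S) :
    ∀ s, t < s → ∀ x, 0 < chain q ν αt t x₀ s x := by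
  intro s
  induction s with
  | zero => omega
  | succ s ih =>
    intro hts x
    rw [chain_succ ν αt t x₀ (by omega)]
    rcases Nat.lt_or_ge t s with h | h
    · have hpos := ih h
      refine Finset.sum_pos (fun y _ => mul_pos (hpos y) (hq0 s y (ν s) (αt s y) x (hν s)))
        ⟨x₀, Finset.mem_univ x₀⟩
    · have hts' : s = t := by omega
      subst hts'
      rw [chain_le ν αt s x₀ (le_refl s)]
      have : ∀ y, (0:ℝ) ≤ (if y = x₀ then (1:ℝ) else 0) * q s y (ν s) (αt s y) x := by
        intro y
        refine mul_nonneg ?_ (le_of_lt (hq0 s y (ν s) (αt s y) x (hν s)))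
        split <;> norm_num
      refine Finset.sum_pos' (fun y _ => this y) ⟨x₀, Finset.mem_univ x₀, ?_⟩
      simp [hq0 s x₀ (ν s) (αt s x₀) x (hν s)]

lemma chain_congr (ν' : ℕ → S → ℝ) (αt αt' : ℕ → S → A) (t : ℕ) (x₀ : S)
    (hνc : ∀ r, t ≤ r → ν r = ν' r) (hαc : ∀ r, t ≤ r → αt r = αt' r) :
    ∀ s, chain q ν αt t x₀ s = chain q ν' αt' t x₀ s := by
  intro s
  induction s with
  | zero => rfl
  | succ s ih =>
    rcases Nat.lt_or_ge s t with h | h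
    · rw [chain_le ν αt t x₀ (by omega : s + 1 ≤ t),
        chain_le ν' αt' t x₀ (by omega : s + 1 ≤ t)]
    · rw [chain_succ ν αt t x₀ h, chain_succ ν' αt' t x₀ h, ih, hνc s h, hαc s h]

end Chain

section CostCongr

lemma cost_congr (T₀ : ℕ) (ψ : S → (S → ℝ) → ℝ) (ν ν' : ℕ → S → ℝ)
    (t : ℕ) (x₀ : S) (αt αt' : ℕ → S → A) (htT : t ≤ T₀)
    (hνc : ∀ r, t ≤ r → ν r = ν' r) (hαc : ∀ r, t ≤ r → αt r = αt' r) :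
    cost q F T₀ ψ ν t x₀ αt = cost q F T₀ ψ ν' t x₀ αt' := by
  unfold cost
  have hch := chain_congr (q := q) ν' αt αt' t x₀ hνc hαc
  rw [hch T₀, hνc T₀ htT]
  congr 1
  refine Finset.sum_congr rfl fun s hs => ?_
  have hts : t ≤ s := (Finset.mem_Ico.mp hs).1
  rw [hch s, hνc s hts, hαc s hts]

lemma value_congr (T₀ : ℕ) (ψ : S → (S → ℝ) → ℝ) (ν ν' : ℕ → S → ℝ)
    (t : ℕ) (x₀ : S) (htT : t ≤ T₀) (hνc : ∀ r, t ≤ r → ν r = ν' r) :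
    value q F T₀ ψ ν t x₀ = value q F T₀ ψ ν' t x₀ := by
  unfold value
  congr 1
  ext r
  constructor
  · rintro ⟨αt, rfl⟩
    exact ⟨αt, (cost_congr T₀ ψ ν ν' t x₀ αt αt htT hνc fun _ _ => rfl)⟩
  · rintro ⟨αt, rfl⟩
    exact ⟨αt, (cost_congr T₀ ψ ν ν' t x₀ αt αt htT hνc fun _ _ => rfl).symm⟩

end CostCongr

section BW

variable [Nonempty A]
variable (hq0 : ∀ s x (μ : S → ℝ) a y, IsProb μ → 0 < q s x μ a y)
variable (hq1 : ∀ s x (μ : S → ℝ) a y, IsProb μ → q s x μ a y < 1)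
variable (hF : ∀ s x (μ : S → ℝ), BddBelow (Set.range fun a : A => F s x μ a))
variable (hqsum : ∀ s x (μ : S → ℝ) a, IsProb μ → ∑ y, q s x μ a y = 1)

lemma stepSet_nonempty (s : ℕ) (x : S) (m : S → ℝ) (w : S → ℝ) :
    Set.Nonempty {r : ℝ | ∃ a : A, r = F s x m a + ∑ y, q s x m a y * w y} := by
  obtain ⟨a⟩ := ‹Nonempty A›
  exact ⟨_, a, rfl⟩

include hq0 hq1 hF in
lemma stepSet_bdd (s : ℕ) (x : S) {m : S → ℝ} (hm : IsProb m) (w : S → ℝ) :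
    BddBelow {r : ℝ | ∃ a : A, r = F s x m a + ∑ y, q s x m a y * w y} := by
  obtain ⟨c, hc⟩ := hF s x m
  refine ⟨c - ∑ y, |w y|, ?_⟩
  rintro r ⟨a, rfl⟩
  have h1 : c ≤ F s x m a := hc ⟨a, rfl⟩
  have h2 : -(∑ y, |w y|) ≤ ∑ y, q s x m a y * w y := by
    rw [← Finset.sum_neg_distrib]
    refine Finset.sum_le_sum fun y _ => ?_
    have hq0' := hq0 s x m a y hm
    have hq1' := hq1 s x m a y hm
    have : |q s x m a y * w y| ≤ |w y| := by
      rw [abs_mul, abs_of_pos hq0']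
      nlinarith [abs_nonneg (w y)]
    nlinarith [neg_abs_le (q s x m a y * w y)]
  have := add_le_add h1 h2
  linarith

include hq0 hq1 hF in
lemma gap_nonneg {T₀ : ℕ} (g : S → ℝ) {ν : ℕ → S → ℝ} (hν : ∀ s, IsProb (ν s))
    {s : ℕ} (hs : s < T₀) (x : S) (a : A) :
    bw q F T₀ g ν s x ≤ F s x (ν s) a + ∑ y, q s x (ν s) a y * bw q F T₀ g ν (s+1) y := by
  rw [bw_rec T₀ g ν hs x]
  exact csInf_le (stepSet_bdd hq0 hq1 hF s x (hν s) _) ⟨a, rfl⟩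

include hq0 hqsum in
lemma cost_telescope (T₀ : ℕ) (ψ : S → (S → ℝ) → ℝ) {ν : ℕ → S → ℝ}
    (hν : ∀ s, IsProb (ν s)) (t : ℕ) (x₀ : S) (αt : ℕ → S → A) (htT : t ≤ T₀) :
    cost q F T₀ ψ ν t x₀ αt
      = bw q F T₀ (fun y => ψ y (ν T₀)) ν t x₀ +
        ∑ s ∈ Finset.Ico t T₀, ∑ x, chain q ν αt t x₀ s x *
          (F s x (ν s) (αt s x)
            + (∑ y, q s x (ν s) (αt s x) y * bw q F T₀ (fun y => ψ y (ν T₀)) ν (s+1) y)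
            - bw q F T₀ (fun y => ψ y (ν T₀)) ν s x) := by
  set g : S → ℝ := fun y => ψ y (ν T₀) with hg
  set W : ℕ → S → ℝ := bw q F T₀ g ν with hW
  have key : ∀ u, t ≤ u → u ≤ T₀ →
      ∑ x, chain q ν αt t x₀ u x * W u x
        = W t x₀
          + (∑ s ∈ Finset.Ico t u, ∑ x, chain q ν αt t x₀ s x *
              (F s x (ν s) (αt s x) + (∑ y, q s x (ν s) (αt s x) y * W (s+1) y) - W s x))
          - ∑ s ∈ Finset.Ico t u, ∑ x, chain q ν αt t x₀ s x * F s x (ν s) (αt s x) := by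
    intro u hu
    induction u, hu using Nat.le_induction with
    | base =>
      intro _
      rw [chain_le ν αt t x₀ (le_refl t)]
      simp
    | succ u hu ih =>
      intro huT
      have huT' : u ≤ T₀ := by omega
      have hIH := ih huT'
      have h1 : ∑ x, chain q ν αt t x₀ (u+1) x * W (u+1) x
          = ∑ y, chain q ν αt t x₀ u y * ∑ x, q u y (ν u) (αt u y) x * W (u+1) x := by
        rw [chain_succ ν αt t x₀ hu]
        dsimp only
        simp only [Finset.sum_mul, Finset.mul_sum]
        rw [Finset.sum_comm]
        exact Finset.sum_congr rfl fun y _ => Finset.sum_congr rfl fun x _ => by ring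
      have h2 : ∑ y, chain q ν αt t x₀ u y *
            (F u y (ν u) (αt u y) + (∑ x, q u y (ν u) (αt u y) x * W (u+1) x) - W u y)
          = (∑ y, chain q ν αt t x₀ u y * F u y (ν u) (αt u y))
            + (∑ y, chain q ν αt t x₀ u y * ∑ x, q u y (ν u) (αt u y) x * W (u+1) x)
            - ∑ y, chain q ν αt t x₀ u y * W u y := by
        rw [← Finset.sum_add_distrib, ← Finset.sum_sub_distrib]
        refine Finset.sum_congr rfl fun y _ => by ring
      rw [Finset.sum_Ico_succ_top hu, Finset.sum_Ico_succ_top hu, h1]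
      linarith [h2, hIH]
  have hfin := key T₀ htT (le_refl T₀)
  have hWT : W T₀ = g := bw_term T₀ g ν (le_refl T₀)
  unfold cost
  rw [show (fun x => ψ x (ν T₀)) = g from rfl] at *
  have : (∑ x, chain q ν αt t x₀ T₀ x * ψ x (ν T₀)) = ∑ x, chain q ν αt t x₀ T₀ x * W T₀ x := by
    rw [hWT]
  rw [this]
  linarith [hfin]

include hq0 hq1 hqsum hF in
lemma value_eq_bw (T₀ : ℕ) (ψ : S → (S → ℝ) → ℝ) {ν : ℕ → S → ℝ}
    (hν : ∀ s, IsProb (ν s)) (t : ℕ) (x₀ : S) (htT : t ≤ T₀) :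
    value q F T₀ ψ ν t x₀ = bw q F T₀ (fun y => ψ y (ν T₀)) ν t x₀ := by
  set g : S → ℝ := fun y => ψ y (ν T₀) with hg
  set W : ℕ → S → ℝ := bw q F T₀ g ν with hW
  have hub : ∀ αt : ℕ → S → A, W t x₀ ≤ cost q F T₀ ψ ν t x₀ αt := by
    intro αt
    rw [cost_telescope hq0 hqsum T₀ ψ hν t x₀ αt htT]
    have : 0 ≤ ∑ s ∈ Finset.Ico t T₀, ∑ x, chain q ν αt t x₀ s x *
        (F s x (ν s) (αt s x) + (∑ y, q s x (ν s) (αt s x) y * W (s+1) y) - W s x) := by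
      refine Finset.sum_nonneg fun s hs => Finset.sum_nonneg fun x _ => ?_
      have hsT : s < T₀ := (Finset.mem_Ico.mp hs).2
      refine mul_nonneg (chain_nonneg hq0 hν αt t x₀ s x) ?_
      have := gap_nonneg hq0 hq1 hF g hν hsT x (αt s x)
      linarith
    linarith
  have hne : {r : ℝ | ∃ αt : ℕ → S → A, r = cost q F T₀ ψ ν t x₀ αt}.Nonempty := by
    obtain ⟨a⟩ := ‹Nonempty A›
    exact ⟨_, fun _ _ => a, rfl⟩
  have hbdd : BddBelow {r : ℝ | ∃ αt : ℕ → S → A, r = cost q F T₀ ψ ν t x₀ αt} := by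
    refine ⟨W t x₀, ?_⟩
    rintro r ⟨αt, rfl⟩
    exact hub αt
  refine le_antisymm ?_ (le_csInf hne (by rintro r ⟨αt, rfl⟩; exact hub αt))
  -- upper bound: ε-optimal strategies
  refine le_of_forall_pos_le_add fun ε hε => ?_
  set N : ℝ := ((T₀ - t : ℕ) : ℝ) with hN
  have hNnn : 0 ≤ N := by positivity
  set δ : ℝ := ε / (N + 1) with hδ
  have hδpos : 0 < δ := by positivity
  have hchoice : ∀ s : ℕ, ∀ x : S, ∃ a : A,
      F s x (ν s) a + ∑ y, q s x (ν s) a y * W (s+1) y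
        < sInf {r : ℝ | ∃ a : A, r = F s x (ν s) a + ∑ y, q s x (ν s) a y * W (s+1) y} + δ := by
    intro s x
    obtain ⟨r, ⟨a, rfl⟩, hr⟩ :=
      Real.lt_sInf_add_pos (stepSet_nonempty (q := q) (F := F) s x (ν s) (W (s+1))) hδpos
    exact ⟨a, hr⟩
  choose αε hαε using hchoice
  have hgap : ∀ s x, t ≤ s → s < T₀ →
      F s x (ν s) (αε s x) + (∑ y, q s x (ν s) (αε s x) y * W (s+1) y) - W s x ≤ δ := by
    intro s x _ hsT
    have := hαε s x
    rw [← bw_rec T₀ g ν hsT x] at this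
    have hWs : bw q F T₀ g ν s x = W s x := rfl
    linarith [this]
  have hcost : cost q F T₀ ψ ν t x₀ αε ≤ W t x₀ + N * δ := by
    rw [cost_telescope hq0 hqsum T₀ ψ hν t x₀ αε htT]
    have hsum : ∑ s ∈ Finset.Ico t T₀, ∑ x, chain q ν αε t x₀ s x *
        (F s x (ν s) (αε s x) + (∑ y, q s x (ν s) (αε s x) y * W (s+1) y) - W s x)
        ≤ ∑ s ∈ Finset.Ico t T₀, δ := by
      refine Finset.sum_le_sum fun s hs => ?_
      obtain ⟨hts, hsT⟩ := Finset.mem_Ico.mp hs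
      calc ∑ x, chain q ν αε t x₀ s x *
            (F s x (ν s) (αε s x) + (∑ y, q s x (ν s) (αε s x) y * W (s+1) y) - W s x)
          ≤ ∑ x, chain q ν αε t x₀ s x * δ := by
            refine Finset.sum_le_sum fun x _ => ?_
            exact mul_le_mul_of_nonneg_left (hgap s x hts hsT)
              (chain_nonneg hq0 hν αε t x₀ s x)
        _ = δ := by rw [← Finset.sum_mul, chain_sum hqsum hν αε t x₀ s, one_mul]
    have hcard : ∑ s ∈ Finset.Ico t T₀, δ = N * δ := by
      rw [Finset.sum_const, Nat.card_Ico, nsmul_eq_mul, hN]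
    linarith [hsum, hcard.le, hcard.ge]
  have hδε : N * δ ≤ ε := by
    rw [hδ, div_eq_inv_mul, ← mul_assoc]
    have h1 : N * (N + 1:ℝ)⁻¹ ≤ 1 := by
      rw [mul_inv_le_iff₀ (by positivity), one_mul]
      linarith
    nlinarith [hε.le]
  calc sInf {r : ℝ | ∃ αt : ℕ → S → A, r = cost q F T₀ ψ ν t x₀ αt}
      ≤ cost q F T₀ ψ ν t x₀ αε := csInf_le hbdd ⟨αε, rfl⟩
    _ ≤ W t x₀ + N * δ := hcost
    _ ≤ W t x₀ + ε := by linarith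

include hq0 hqsum in
lemma cost_eq_of_opt (T₀ : ℕ) (ψ : S → (S → ℝ) → ℝ) {ν : ℕ → S → ℝ}
    (hν : ∀ s, IsProb (ν s)) (t : ℕ) (α : ℕ → S → A) (htT : t ≤ T₀)
    (hopt : ∀ s, t ≤ s → s < T₀ → ∀ x,
      F s x (ν s) (α s x)
        + ∑ y, q s x (ν s) (α s x) y * bw q F T₀ (fun y => ψ y (ν T₀)) ν (s+1) y
        = bw q F T₀ (fun y => ψ y (ν T₀)) ν s x) :
    ∀ x₀, cost q F T₀ ψ ν t x₀ α = bw q F T₀ (fun y => ψ y (ν T₀)) ν t x₀ := by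
  intro x₀
  rw [cost_telescope hq0 hqsum T₀ ψ hν t x₀ α htT]
  have : ∑ s ∈ Finset.Ico t T₀, ∑ x, chain q ν α t x₀ s x *
      (F s x (ν s) (α s x)
        + (∑ y, q s x (ν s) (α s x) y * bw q F T₀ (fun y => ψ y (ν T₀)) ν (s+1) y)
        - bw q F T₀ (fun y => ψ y (ν T₀)) ν s x) = 0 := by
    refine Finset.sum_eq_zero fun s hs => Finset.sum_eq_zero fun x _ => ?_
    obtain ⟨hts, hsT⟩ := Finset.mem_Ico.mp hs
    rw [show F s x (ν s) (α s x)
        + (∑ y, q s x (ν s) (α s x) y * bw q F T₀ (fun y => ψ y (ν T₀)) ν (s+1) y)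
        - bw q F T₀ (fun y => ψ y (ν T₀)) ν s x = 0 by
      have := hopt s hts hsT x; linarith]
    ring
  rw [this, add_zero]

include hq0 hq1 hqsum hF in
lemma opt_of_cost_eq (T₀ : ℕ) (ψ : S → (S → ℝ) → ℝ) {ν : ℕ → S → ℝ}
    (hν : ∀ s, IsProb (ν s)) (t : ℕ) (α : ℕ → S → A) (htT : t ≤ T₀)
    (heq : ∀ x₀, cost q F T₀ ψ ν t x₀ α = bw q F T₀ (fun y => ψ y (ν T₀)) ν t x₀) :
    ∀ s, t ≤ s → s < T₀ → ∀ x,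
      F s x (ν s) (α s x)
        + ∑ y, q s x (ν s) (α s x) y * bw q F T₀ (fun y => ψ y (ν T₀)) ν (s+1) y
        = bw q F T₀ (fun y => ψ y (ν T₀)) ν s x := by
  intro s hts hsT x
  set g : S → ℝ := fun y => ψ y (ν T₀) with hg
  set W : ℕ → S → ℝ := bw q F T₀ g ν with hW
  have htel := cost_telescope (F := F) hq0 hqsum T₀ ψ hν t x α htT
  rw [heq x] at htel
  have hzero : ∑ s' ∈ Finset.Ico t T₀, ∑ x', chain q ν α t x s' x' *
      (F s' x' (ν s') (α s' x') + (∑ y, q s' x' (ν s') (α s' x') y * W (s'+1) y) - W s' x')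
      = 0 := by linarith
  have hnn : ∀ s' ∈ Finset.Ico t T₀, ∀ x' : S,
      0 ≤ chain q ν α t x s' x' *
        (F s' x' (ν s') (α s' x') + (∑ y, q s' x' (ν s') (α s' x') y * W (s'+1) y) - W s' x') := by
    intro s' hs' x'
    obtain ⟨_, hs'T⟩ := Finset.mem_Ico.mp hs'
    refine mul_nonneg (chain_nonneg hq0 hν α t x s' x') ?_
    have := gap_nonneg hq0 hq1 hF g hν hs'T x' (α s' x')
    linarith
  have houter := (Finset.sum_eq_zero_iff_of_nonneg
    (fun s' hs' => Finset.sum_nonneg fun x' _ => hnn s' hs' x')).mp hzero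
  have hsmem : s ∈ Finset.Ico t T₀ := Finset.mem_Ico.mpr ⟨hts, hsT⟩
  have hinner := (Finset.sum_eq_zero_iff_of_nonneg
    (fun x' _ => hnn s hsmem x')).mp (houter s hsmem)
  have hterm := hinner x (Finset.mem_univ x)
  have hchpos : 0 < chain q ν α t x s x := by
    rcases Nat.lt_or_ge t s with h | h
    · exact chain_pos hq0 hqsum hν α t x s h x
    · have hst : s = t := by omega
      subst hst
      rw [chain_le ν α s x (le_refl s)]
      simp
  have hgap0 : F s x (ν s) (α s x) + (∑ y, q s x (ν s) (α s x) y * W (s+1) y) - W s x = 0 := by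
    by_contra h
    exact h (by
      have := mul_eq_zero.mp hterm
      rcases this with h' | h'
      · exact absurd h' (ne_of_gt hchpos)
      · exact h')
  linarith

omit [Nonempty A] in
lemma bw_congr (T₀ : ℕ) (g : S → ℝ) (ν ν' : ℕ → S → ℝ) (s0 : ℕ)
    (hc : ∀ r, s0 ≤ r → r < T₀ → ν r = ν' r) :
    ∀ s, s0 ≤ s → bw q F T₀ g ν s = bw q F T₀ g ν' s := by
  suffices h : ∀ k s, T₀ - s ≤ k → s0 ≤ s → bw q F T₀ g ν s = bw q F T₀ g ν' s by
    intro s hs; exact h (T₀ - s) s (le_refl _) hs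
  intro k
  induction k with
  | zero =>
    intro s hk _
    have : T₀ ≤ s := by omega
    rw [bw_term T₀ g ν this, bw_term T₀ g ν' this]
  | succ k ih =>
    intro s hk hs
    rcases Nat.lt_or_ge s T₀ with h | h
    · funext x
      rw [bw_rec T₀ g ν h x, bw_rec T₀ g ν' h x,
        hc s hs h, ih (s+1) (by omega) (by omega)]
    · rw [bw_term T₀ g ν h, bw_term T₀ g ν' h]

omit [Nonempty A] in
lemma bw_nest (Tb T₀ : ℕ) (g : S → ℝ) (ν : ℕ → S → ℝ) (hT : T₀ ≤ Tb) :
    ∀ s, s ≤ T₀ → bw q F T₀ (bw q F Tb g ν T₀) ν s = bw q F Tb g ν s := by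
  suffices h : ∀ k s, T₀ - s ≤ k → s ≤ T₀ →
      bw q F T₀ (bw q F Tb g ν T₀) ν s = bw q F Tb g ν s by
    intro s hs; exact h (T₀ - s) s (le_refl _) hs
  intro k
  induction k with
  | zero =>
    intro s hk hs
    have hsT : s = T₀ := by omega
    subst hsT
    rw [bw_term _ _ ν (le_refl _)]
  | succ k ih =>
    intro s hk hs
    rcases Nat.lt_or_ge s T₀ with h | h
    · funext x
      rw [bw_rec T₀ _ ν h x, bw_rec Tb g ν (by omega : s < Tb) x,
        ih (s+1) (by omega) (by omega)]
    · have hsT : s = T₀ := by omega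
      subst hsT
      rw [bw_term _ _ ν (le_refl _)]

end BW

end MFGDPP

/-- Theorem 2.4, DPP for the raw set value.  For `0 ≤ t < T₀ ≤ T` and
`μ ∈ 𝒫₀(𝕊)`,
`𝕍₀(t,μ) = { J(T₀,ψ;t,μ,α*;·,α*) : ψ : 𝕊×𝒫₀(𝕊) → ℝ, α* ∈ 𝒜_state` such that
`ψ(·,μ^{α*}_{T₀}) ∈ 𝕍₀(T₀,μ^{α*}_{T₀})` and `α* ∈ ℳ_state(T₀,ψ;t,μ) }`. -/
theorem raw_set_value_DPP
    {S A : Type*} [Fintype S] [DecidableEq S] [Nonempty A]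
    (T : ℕ) (q : ℕ → S → (S → ℝ) → A → S → ℝ)
    (F : ℕ → S → (S → ℝ) → A → ℝ) (G : S → (S → ℝ) → ℝ)
    (hq0 : ∀ s x μ a y, IsProb μ → 0 < q s x μ a y)
    (hq1 : ∀ s x μ a y, IsProb μ → q s x μ a y < 1)
    (hqsum : ∀ s x μ a, IsProb μ → ∑ y, q s x μ a y = 1)
    (hF : ∀ s x (μ : S → ℝ), BddBelow (Set.range fun a : A => F s x μ a))
    (t T₀ : ℕ) (htT₀ : t < T₀) (hT₀T : T₀ ≤ T)
    (μ : S → ℝ) (hμ : IsProb μ) (hμfull : ∀ x, 0 < μ x) :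
    rawSetValue q F G T t μ =
      { φ | ∃ (ψ : S → (S → ℝ) → ℝ) (α : ℕ → S → A),
          (fun y => ψ y (flow q α t μ T₀)) ∈ rawSetValue q F G T T₀ (flow q α t μ T₀) ∧
          isMFE q F T₀ ψ t μ α ∧
          φ = fun x => cost q F T₀ ψ (flow q α t μ) t x α } := by
  have htT₀' : t ≤ T₀ := le_of_lt htT₀
  have htT : t ≤ T := le_trans htT₀' hT₀T
  ext φ
  simp only [rawSetValue, Set.mem_setOf_eq]
  constructor
  · -- forward inclusion
    rintro ⟨α, hMFE, rfl⟩
    set ν : ℕ → S → ℝ := flow q α t μ with hν0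
    have hν : ∀ s, IsProb (ν s) := MFGDPP.isProb_flow hq0 hqsum α t hμ
    set g : S → ℝ := fun y => G y (ν T) with hg
    set W : ℕ → S → ℝ := MFGDPP.bw q F T g ν with hW
    have hval : ∀ x, value q F T G ν t x = W t x := fun x =>
      MFGDPP.value_eq_bw hq0 hq1 hF hqsum T G hν t x htT
    have hcosth : ∀ x, cost q F T G ν t x α = W t x := fun x => (hMFE x).trans (hval x)
    have hopt := MFGDPP.opt_of_cost_eq hq0 hq1 hF hqsum T G hν t α htT hcosth
    -- the shifted flow
    have hshift : ∀ s, T₀ ≤ s → flow q α T₀ (ν T₀) s = ν s :=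
      MFGDPP.flow_shift α t T₀ μ htT₀'
    have hν' : ∀ s, IsProb (flow q α T₀ (ν T₀) s) :=
      MFGDPP.isProb_flow hq0 hqsum α T₀ (hν T₀)
    have hterm : (fun y => G y (flow q α T₀ (ν T₀) T)) = g := by
      funext y; rw [hshift T hT₀T]
    have hbweq : ∀ s, T₀ ≤ s →
        MFGDPP.bw q F T (fun y => G y (flow q α T₀ (ν T₀) T)) (flow q α T₀ (ν T₀)) s = W s := by
      intro s hs
      rw [hterm]
      exact MFGDPP.bw_congr T g (flow q α T₀ (ν T₀)) ν T₀ (fun r hr _ => hshift r hr) s hs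
    have hopt' : ∀ s, T₀ ≤ s → s < T → ∀ x,
        F s x (flow q α T₀ (ν T₀) s) (α s x)
          + ∑ y, q s x (flow q α T₀ (ν T₀) s) (α s x) y *
              MFGDPP.bw q F T (fun y => G y (flow q α T₀ (ν T₀) T)) (flow q α T₀ (ν T₀)) (s+1) y
          = MFGDPP.bw q F T (fun y => G y (flow q α T₀ (ν T₀) T)) (flow q α T₀ (ν T₀)) s x := by
      intro s hs hsT x
      rw [hshift s hs, hbweq (s+1) (by omega), hbweq s hs]
      exact hopt s (le_trans htT₀' hs) hsT x
    have hcost' : ∀ x, cost q F T G (flow q α T₀ (ν T₀)) T₀ x α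
        = MFGDPP.bw q F T (fun y => G y (flow q α T₀ (ν T₀) T)) (flow q α T₀ (ν T₀)) T₀ x :=
      MFGDPP.cost_eq_of_opt hq0 hqsum T G hν' T₀ α hT₀T hopt'
    have hval'' : ∀ x, value q F T G (flow q α T₀ (ν T₀)) T₀ x
        = MFGDPP.bw q F T (fun y => G y (flow q α T₀ (ν T₀) T)) (flow q α T₀ (ν T₀)) T₀ x :=
      fun x => MFGDPP.value_eq_bw hq0 hq1 hF hqsum T G hν' T₀ x hT₀T
    -- head value function identities
    have hnest : ∀ s, s ≤ T₀ → MFGDPP.bw q F T₀ (fun y => W T₀ y) ν s = W s := fun s hs =>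
      MFGDPP.bw_nest T T₀ g ν hT₀T s hs
    have hopt2 : ∀ s, t ≤ s → s < T₀ → ∀ x',
        F s x' (ν s) (α s x') + ∑ y, q s x' (ν s) (α s x') y *
          MFGDPP.bw q F T₀ (fun y => W T₀ y) ν (s+1) y
        = MFGDPP.bw q F T₀ (fun y => W T₀ y) ν s x' := by
      intro s hts hsT x'
      rw [hnest (s+1) (by omega), hnest s (le_of_lt hsT)]
      exact hopt s hts (lt_of_lt_of_le hsT hT₀T) x'
    have hcost2 : ∀ x, cost q F T₀ (fun y _ => W T₀ y) ν t x α
        = MFGDPP.bw q F T₀ (fun y => W T₀ y) ν t x :=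
      MFGDPP.cost_eq_of_opt hq0 hqsum T₀ (fun y _ => W T₀ y) hν t α htT₀' hopt2
    have hval2 : ∀ x, value q F T₀ (fun y _ => W T₀ y) ν t x
        = MFGDPP.bw q F T₀ (fun y => W T₀ y) ν t x :=
      fun x => MFGDPP.value_eq_bw hq0 hq1 hF hqsum T₀ (fun y _ => W T₀ y) hν t x htT₀'
    refine ⟨fun y _ => W T₀ y, α, ⟨α, ?_, ?_⟩, ?_, ?_⟩
    · exact fun x => (hcost' x).trans (hval'' x).symm
    · funext x
      rw [hcost' x, hbweq T₀ (le_refl T₀)]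
    · exact fun x => (hcost2 x).trans (hval2 x).symm
    · funext x
      rw [hcosth x, hcost2 x, hnest t htT₀']
  · -- backward inclusion
    rintro ⟨ψ, α, ⟨β, hβMFE, hβcost⟩, hαMFE, rfl⟩
    set ν : ℕ → S → ℝ := flow q α t μ with hν0
    have hν : ∀ s, IsProb (ν s) := MFGDPP.isProb_flow hq0 hqsum α t hμ
    set νβ : ℕ → S → ℝ := flow q β T₀ (ν T₀) with hνβ0
    have hνβ : ∀ s, IsProb (νβ s) := MFGDPP.isProb_flow hq0 hqsum β T₀ (hν T₀)
    set α' : ℕ → S → A := concat T₀ α β with hα'def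
    set ν'' : ℕ → S → ℝ := flow q α' t μ with hν''0
    have hν''p : ∀ s, IsProb (ν'' s) := MFGDPP.isProb_flow hq0 hqsum α' t hμ
    have hlow : ∀ s, s ≤ T₀ → ν'' s = ν s := fun s hs =>
      MFGDPP.flow_congr_alpha α' α t μ s (fun r hr => funext fun x => by
        simp only [hα'def, concat, if_pos (lt_of_lt_of_le hr hs)])
    have hhigh : ∀ s, T₀ ≤ s → ν'' s = νβ s := fun s hs =>
      MFGDPP.flow_concat_ge α β t T₀ μ htT₀' s hs
    set gf : S → ℝ := fun y => G y (ν'' T) with hgf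
    set Wf : ℕ → S → ℝ := MFGDPP.bw q F T gf ν'' with hWf
    -- tail analysis via β
    have htermβ : (fun y => G y (νβ T)) = gf := by
      funext y; rw [← hhigh T hT₀T]
    have hWβ : ∀ s, T₀ ≤ s → MFGDPP.bw q F T (fun y => G y (νβ T)) νβ s = Wf s := by
      intro s hs
      rw [htermβ]
      exact MFGDPP.bw_congr T gf νβ ν'' T₀ (fun r hr _ => (hhigh r hr).symm) s hs
    have hβval : ∀ x, cost q F T G νβ T₀ x β
        = MFGDPP.bw q F T (fun y => G y (νβ T)) νβ T₀ x := by
      intro x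
      rw [hβMFE x]
      exact MFGDPP.value_eq_bw hq0 hq1 hF hqsum T G hνβ T₀ x hT₀T
    have hβopt := MFGDPP.opt_of_cost_eq hq0 hq1 hF hqsum T G hνβ T₀ β hT₀T hβval
    have hψW : ∀ y, ψ y (ν T₀) = Wf T₀ y := by
      intro y
      have h1 := congrFun hβcost y
      rw [h1, hβval y, hWβ T₀ (le_refl T₀)]
    -- head analysis via α
    have hval' : ∀ x, value q F T₀ ψ ν t x
        = MFGDPP.bw q F T₀ (fun y => ψ y (ν T₀)) ν t x :=
      fun x => MFGDPP.value_eq_bw hq0 hq1 hF hqsum T₀ ψ hν t x htT₀'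
    have hαcost : ∀ x, cost q F T₀ ψ ν t x α
        = MFGDPP.bw q F T₀ (fun y => ψ y (ν T₀)) ν t x :=
      fun x => (hαMFE x).trans (hval' x)
    have hαopt := MFGDPP.opt_of_cost_eq hq0 hq1 hF hqsum T₀ ψ hν t α htT₀' hαcost
    have hterm2 : (fun y => ψ y (ν T₀)) = fun y => Wf T₀ y := funext hψW
    have hWhead : ∀ s, s ≤ T₀ →
        MFGDPP.bw q F T₀ (fun y => ψ y (ν T₀)) ν s = Wf s := by
      intro s hsT
      rw [hterm2]
      have h1 : MFGDPP.bw q F T₀ (fun y => Wf T₀ y) ν s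
          = MFGDPP.bw q F T₀ (fun y => Wf T₀ y) ν'' s :=
        MFGDPP.bw_congr T₀ (fun y => Wf T₀ y) ν ν'' 0
          (fun r _ hrT => (hlow r (le_of_lt hrT)).symm) s (Nat.zero_le s)
      rw [h1]
      exact MFGDPP.bw_nest T T₀ gf ν'' hT₀T s hsT
    -- α' is optimal against Wf at all times
    have hopt'' : ∀ s, t ≤ s → s < T → ∀ x,
        F s x (ν'' s) (α' s x)
          + ∑ y, q s x (ν'' s) (α' s x) y *
              MFGDPP.bw q F T (fun y => G y (ν'' T)) ν'' (s+1) y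
          = MFGDPP.bw q F T (fun y => G y (ν'' T)) ν'' s x := by
      intro s hts hsT x
      rcases Nat.lt_or_ge s T₀ with h | h
      · have hαs : α' s = α s := funext fun x' => by
          simp only [hα'def, concat, if_pos h]
        have hbw1 : MFGDPP.bw q F T (fun y => G y (ν'' T)) ν'' (s+1)
            = MFGDPP.bw q F T₀ (fun y => ψ y (ν T₀)) ν (s+1) := (hWhead (s+1) (by omega)).symm
        have hbw2 : MFGDPP.bw q F T (fun y => G y (ν'' T)) ν'' s
            = MFGDPP.bw q F T₀ (fun y => ψ y (ν T₀)) ν s := (hWhead s (le_of_lt h)).symm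
        rw [hαs, hlow s (le_of_lt h), hbw1, hbw2]
        exact hαopt s hts h x
      · have hαs : α' s = β s := funext fun x' => by
          simp only [hα'def, concat, if_neg (not_lt.mpr h)]
        have hbw1 : MFGDPP.bw q F T (fun y => G y (ν'' T)) ν'' (s+1)
            = MFGDPP.bw q F T (fun y => G y (νβ T)) νβ (s+1) := (hWβ (s+1) (by omega)).symm
        have hbw2 : MFGDPP.bw q F T (fun y => G y (ν'' T)) ν'' s
            = MFGDPP.bw q F T (fun y => G y (νβ T)) νβ s := (hWβ s h).symm
        rw [hαs, hhigh s h, hbw1, hbw2]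
        exact hβopt s h hsT x
    have hcostf : ∀ x, cost q F T G ν'' t x α'
        = MFGDPP.bw q F T (fun y => G y (ν'' T)) ν'' t x :=
      MFGDPP.cost_eq_of_opt hq0 hqsum T G hν''p t α' htT hopt''
    have hvalf : ∀ x, value q F T G ν'' t x
        = MFGDPP.bw q F T (fun y => G y (ν'' T)) ν'' t x :=
      fun x => MFGDPP.value_eq_bw hq0 hq1 hF hqsum T G hν''p t x htT
    refine ⟨α', fun x => (hcostf x).trans (hvalf x).symm, ?_⟩
    funext x
    rw [hαcost x]
    have h2 := congrFun (hWhead t htT₀') x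
    rw [h2]
    exact (hcostf x).symm
end
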